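/- Let C(G) be the full cone over a finite graph G with cone point p, and let f be a function on C(G) with f(p) = 0. Then Γ₂ᶜ(f)(p) = Σ_{y ∈ V} Γ₁(f)(y) - ((|V| - 3)/4) Σ_{y ∈ V} f(y)² + (1/2)(Σ_{y ∈ V} f(y))². -/

import Mathlib

open Finset

variable {V : Type*}

noncomputable def lap (G : SimpleGraph V) [∀ v, Fintype (G.neighborSet v)] (f : V → ℝ) (x : V) : ℝ :=
  ∑ y ∈ G.neighborFinset x, (f y - f x)

noncomputable def gam (G : SimpleGraph V) [∀ v, Fintype (G.neighborSet v)] (f g : V → ℝ) (x : V) : ℝ :=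
  (1/2) * ∑ y ∈ G.neighborFinset x, (f y - f x) * (g y - g x)

noncomputable def gam1 (G : SimpleGraph V) [∀ v, Fintype (G.neighborSet v)] (f : V → ℝ) (x : V) : ℝ :=
  (1/2) * ∑ y ∈ G.neighborFinset x, (f y - f x)^2

noncomputable def gam2 (G : SimpleGraph V) [∀ v, Fintype (G.neighborSet v)] (f : V → ℝ) (x : V) : ℝ :=
  (1/2) * (lap G (gam1 G f) x - 2 * gam G f (lap G f) x)

def cone (G : SimpleGraph V) : SimpleGraph (Option V) where
  Adj a b := a ≠ b ∧ ∀ x ∈ a, ∀ y ∈ b, G.Adj x y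
  symm := ⟨fun _ _ h => ⟨h.1.symm, fun x hx y hy => (h.2 y hy x hx).symm⟩⟩
  loopless := ⟨fun _ h => h.1 rfl⟩

instance (G : SimpleGraph V) [DecidableEq V] [DecidableRel G.Adj] :
    DecidableRel (cone G).Adj := fun a b =>
  inferInstanceAs (Decidable (a ≠ b ∧ ∀ x ∈ a, ∀ y ∈ b, G.Adj x y))

lemma cone_nbr_none (G : SimpleGraph V) [Fintype V] [DecidableEq V] [DecidableRel G.Adj] :
    (cone G).neighborFinset none = Finset.univ.map Function.Embedding.some := by
  ext y
  simp only [SimpleGraph.mem_neighborFinset]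
  cases y <;> simp [SimpleGraph.mem_neighborFinset, cone, Function.Embedding.some]

lemma cone_nbr_some (G : SimpleGraph V) [Fintype V] [DecidableEq V] [DecidableRel G.Adj] (v : V) :
    (cone G).neighborFinset (some v)
      = insert none ((G.neighborFinset v).map Function.Embedding.some) := by
  ext y
  simp only [SimpleGraph.mem_neighborFinset]
  cases y with
  | none => simp [SimpleGraph.mem_neighborFinset, cone]
  | some w =>
    simp [SimpleGraph.mem_neighborFinset, cone, Function.Embedding.some]
    intro h; exact fun e => (G.loopless.irrefl v (e ▸ h)).elim

lemma sum_cone_none (G : SimpleGraph V) [Fintype V] [DecidableEq V] [DecidableRel G.Adj]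
    (h : Option V → ℝ) :
    ∑ y ∈ (cone G).neighborFinset none, h y = ∑ v : V, h (some v) := by
  rw [cone_nbr_none, Finset.sum_map]; rfl

lemma sum_cone_some (G : SimpleGraph V) [Fintype V] [DecidableEq V] [DecidableRel G.Adj]
    (v : V) (h : Option V → ℝ) :
    ∑ y ∈ (cone G).neighborFinset (some v), h y
      = h none + ∑ y ∈ G.neighborFinset v, h (some y) := by
  rw [cone_nbr_some, Finset.sum_insert (by simp), Finset.sum_map]; rfl

lemma sum_sym (G : SimpleGraph V) [Fintype V] [DecidableRel G.Adj] (F : V → V → ℝ) :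
    ∑ v : V, ∑ y ∈ G.neighborFinset v, F v y = ∑ v : V, ∑ y ∈ G.neighborFinset v, F y v := by
  simp_rw [SimpleGraph.neighborFinset_eq_filter, Finset.sum_filter]
  calc ∑ v : V, ∑ y : V, (if G.Adj v y then F v y else 0)
      = ∑ v : V, ∑ y : V, (if G.Adj y v then F v y else 0) :=
        Finset.sum_congr rfl fun v _ => Finset.sum_congr rfl fun y _ =>
          if_congr (G.adj_comm v y) rfl rfl
    _ = ∑ y : V, ∑ v : V, (if G.Adj y v then F v y else 0) := Finset.sum_comm
    _ = ∑ v : V, ∑ y : V, (if G.Adj v y then F y v else 0) := rfl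

lemma divergence (G : SimpleGraph V) [Fintype V] [DecidableRel G.Adj] (g : V → ℝ) :
    ∑ v : V, g v * lap G g v = - ∑ v : V, gam1 G g v := by
  have h1 := sum_sym G (fun v y => g v * (g y - g v))
  have key : ∑ v : V, ∑ y ∈ G.neighborFinset v, (g y - g v)^2
      = -2 * ∑ v : V, ∑ y ∈ G.neighborFinset v, g v * (g y - g v) := by
    have hpt : ∀ v : V, ∀ y : V, (g y - g v)^2
        = -(g v * (g y - g v) + g y * (g v - g y)) := by intro v y; ring
    calc ∑ v : V, ∑ y ∈ G.neighborFinset v, (g y - g v)^2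
        = ∑ v : V, ∑ y ∈ G.neighborFinset v, -(g v * (g y - g v) + g y * (g v - g y)) := by
          simp_rw [hpt]
      _ = -(∑ v : V, ∑ y ∈ G.neighborFinset v, g v * (g y - g v)
            + ∑ v : V, ∑ y ∈ G.neighborFinset v, g y * (g v - g y)) := by
          simp [Finset.sum_add_distrib]
      _ = -2 * ∑ v : V, ∑ y ∈ G.neighborFinset v, g v * (g y - g v) := by
          rw [← h1]; ring
  simp only [lap, gam1, Finset.mul_sum]
  have h2 : ∑ x : V, ∑ i ∈ G.neighborFinset x, (1/2:ℝ)*(g i - g x)^2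
      = (1/2) * ∑ x : V, ∑ i ∈ G.neighborFinset x, (g i - g x)^2 := by
    rw [Finset.mul_sum]
    exact Finset.sum_congr rfl fun _ _ => (Finset.mul_sum _ _ _).symm
  rw [h2, key]; ring


theorem stmt6 (G : SimpleGraph V) [Fintype V] [DecidableEq V] [DecidableRel G.Adj]
    (f : Option V → ℝ) (hf : f none = 0) :
    gam2 (cone G) f none
      = ∑ y : V, gam1 G (fun z => f (some z)) y
        - ((Fintype.card V : ℝ) - 3) / 4 * ∑ y : V, (f (some y))^2
        + (1/2) * (∑ y : V, f (some y))^2 := by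
  classical
  set g : V → ℝ := fun z => f (some z) with hg
  have hgv : ∀ v, g v = f (some v) := fun v => rfl
  set S : ℝ := ∑ v : V, f (some v) with hS
  set Q : ℝ := ∑ v : V, (f (some v))^2 with hQ
  set T : ℝ := ∑ v : V, gam1 G g v with hT
  set n : ℝ := (Fintype.card V : ℝ) with hn
  have p1 : gam1 (cone G) f none = (1/2) * Q := by
    rw [gam1, sum_cone_none, hQ]
    simp [hf]
  have p2 : lap (cone G) f none = S := by
    rw [lap, sum_cone_none, hS]
    simp [hf]
  have p3 : ∀ v, gam1 (cone G) f (some v) = (1/2)*(f (some v))^2 + gam1 G g v := by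
    intro v
    rw [gam1, sum_cone_some, gam1, hf]
    simp only [hgv]
    ring
  have p4 : ∀ v, lap (cone G) f (some v) = lap G g v - f (some v) := by
    intro v
    rw [lap, sum_cone_some, lap, hf]
    simp only [hgv]
    ring
  have hA : lap (cone G) (gam1 (cone G) f) none = T + (1/2)*Q - n*((1/2)*Q) := by
    rw [lap, sum_cone_none]
    have : ∀ v : V, gam1 (cone G) f (some v) - gam1 (cone G) f none
        = (1/2)*(f (some v))^2 + gam1 G g v - (1/2)*Q := by
      intro v; rw [p3, p1]
    rw [Finset.sum_congr rfl fun v _ => this v]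
    rw [Finset.sum_sub_distrib, Finset.sum_add_distrib, Finset.sum_const, ← Finset.mul_sum,
      ← hQ, ← hT, nsmul_eq_mul, Finset.card_univ, ← hn]
    ring
  have hB : gam (cone G) f (lap (cone G) f) none = (1/2)*(-T - Q - S*S) := by
    rw [gam, sum_cone_none]
    have : ∀ v : V, (f (some v) - f none) * (lap (cone G) f (some v) - lap (cone G) f none)
        = g v * lap G g v - (f (some v))^2 - f (some v) * S := by
      intro v; rw [p4, p2, hf, hgv]; ring
    rw [Finset.sum_congr rfl fun v _ => this v]
    rw [Finset.sum_sub_distrib, Finset.sum_sub_distrib, divergence, ← Finset.sum_mul,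
      ← hT, ← hQ, ← hS]
  rw [gam2, hA, hB]
  ring
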